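/- arXiv:2207.00926 — 5 statements merged into one kernel-verified Lean document; each statement's English description precedes it below -/
import Mathlib

section
/- Let t ∈ (0,1), μ₁, μ₂ ∈ ℝ, and set μ₁₋ = μ₁ + z_{t/2}, μ₁₊ = μ₁ − z_{t/2}, μ₂₋ = μ₂ + z_{t/2}, μ₂₊ = μ₂ − z_{t/2}. Then for every ρ ∈ (−1,1), the function Q has derivative at ρ equal to (2π√(1−ρ²))^{−1} · [ exp(−(μ₁₋² + μ₂₋² − 2ρμ₁₋μ₂₋)/(2(1−ρ²))) + exp(−(μ₁₊² + μ₂₊² − 2ρμ₁₊μ₂₊)/(2(1−ρ²))) − exp(−(μ₁₋² + μ₂₊² − 2ρμ₁₋μ₂₊)/(2(1−ρ²))) − exp(−(μ₁₊² + μ₂₋² − 2ρμ₁₊μ₂₋)/(2(1−ρ²))) ]. -/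
open MeasureTheory Real Set Filter Asymptotics

/-- Standard normal density. -/
noncomputable def stdPDF (x : ℝ) : ℝ := (Real.sqrt (2 * Real.pi))⁻¹ * Real.exp (-x ^ 2 / 2)

/-- Standard normal CDF. -/
noncomputable def stdCDF (x : ℝ) : ℝ := ∫ u in Set.Iio x, stdPDF u

/-- Bivariate normal density with means `μ₁ μ₂`, unit variances, correlation `ρ`. -/
noncomputable def bvnPDF (μ₁ μ₂ ρ x y : ℝ) : ℝ :=
  (2 * Real.pi * Real.sqrt (1 - ρ ^ 2))⁻¹ *
    Real.exp (-((x - μ₁) ^ 2 - 2 * ρ * (x - μ₁) * (y - μ₂) + (y - μ₂) ^ 2) / (2 * (1 - ρ ^ 2)))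

/-- `Q(ρ)`: probability both coordinates exceed `|z|` in absolute value. -/
noncomputable def quadProb (μ₁ μ₂ z ρ : ℝ) : ℝ :=
  ∫ p in {p : ℝ × ℝ | |z| < |p.1| ∧ |z| < |p.2|}, bvnPDF μ₁ μ₂ ρ p.1 p.2

/-- `Cov(ρ)`: covariance of the two-sided rejection indicators. -/
noncomputable def covInd (μ₁ μ₂ z ρ : ℝ) : ℝ :=
  quadProb μ₁ μ₂ z ρ -
    (stdCDF (z + μ₁) + stdCDF (z - μ₁)) * (stdCDF (z + μ₂) + stdCDF (z - μ₂))

noncomputable def Hfun (μ₁ μ₂ ρ x y : ℝ) : ℝ :=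
  bvnPDF μ₁ μ₂ ρ x y * ((ρ * (y - μ₂) - (x - μ₁)) / (1 - ρ ^ 2))

noncomputable def Dfun (μ₁ μ₂ ρ x y : ℝ) : ℝ :=
  bvnPDF μ₁ μ₂ ρ x y *
    ((ρ * (1 - ρ ^ 2) + (x - μ₁) * (y - μ₂) * (1 - ρ ^ 2) -
      ρ * ((x - μ₁) ^ 2 - 2 * ρ * (x - μ₁) * (y - μ₂) + (y - μ₂) ^ 2)) / (1 - ρ ^ 2) ^ 2)

noncomputable def Cbound (r : ℝ) : ℝ :=
  (2 * Real.pi * Real.sqrt (1 - r ^ 2))⁻¹ * (4 / (1 - r ^ 2) ^ 2) * (1 + 4 / (1 - r))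

noncomputable def abound (r : ℝ) : ℝ := (1 - r) / 4

lemma hasDerivAt_bvn_x (μ₁ μ₂ ρ x y : ℝ) (hρ : ρ ^ 2 < 1) :
    HasDerivAt (fun x => bvnPDF μ₁ μ₂ ρ x y) (Hfun μ₁ μ₂ ρ x y) x := by
  have hs : 0 < 1 - ρ ^ 2 := by nlinarith
  have hw : 0 < Real.sqrt (1 - ρ ^ 2) := Real.sqrt_pos.2 hs
  have hx : HasDerivAt (fun x : ℝ => x - μ₁) 1 x := (hasDerivAt_id x).sub_const μ₁
  have hx2 : HasDerivAt (fun x : ℝ => (x - μ₁) ^ 2) ((2:ℕ) * (x - μ₁) ^ 1 * 1) x := hx.pow 2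
  have hcross : HasDerivAt (fun x : ℝ => 2 * ρ * (x - μ₁) * (y - μ₂))
      (2 * ρ * 1 * (y - μ₂)) x := by
    have := (hx.const_mul (2 * ρ)).mul_const (y - μ₂)
    simpa [mul_assoc] using this
  have hnum : HasDerivAt (fun x : ℝ =>
      -((x - μ₁) ^ 2 - 2 * ρ * (x - μ₁) * (y - μ₂) + (y - μ₂) ^ 2))
      (2 * ρ * (y - μ₂) - 2 * (x - μ₁)) x := by
    exact (((hx2.sub hcross).add_const ((y - μ₂) ^ 2)).neg).congr_deriv (by push_cast; ring)
  have hexp : HasDerivAt (fun x : ℝ =>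
      Real.exp (-((x - μ₁) ^ 2 - 2 * ρ * (x - μ₁) * (y - μ₂) + (y - μ₂) ^ 2) /
        (2 * (1 - ρ ^ 2))))
      (Real.exp (-((x - μ₁) ^ 2 - 2 * ρ * (x - μ₁) * (y - μ₂) + (y - μ₂) ^ 2) /
        (2 * (1 - ρ ^ 2))) * ((2 * ρ * (y - μ₂) - 2 * (x - μ₁)) / (2 * (1 - ρ ^ 2)))) x :=
    (hnum.div_const _).exp
  have hmain := hexp.const_mul ((2 * Real.pi * Real.sqrt (1 - ρ ^ 2))⁻¹)
  refine hmain.congr_deriv ?_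
  unfold Hfun bvnPDF
  field_simp

lemma hasDerivAt_Hfun_y (μ₁ μ₂ ρ x y : ℝ) (hρ : ρ ^ 2 < 1) :
    HasDerivAt (fun y => Hfun μ₁ μ₂ ρ x y) (Dfun μ₁ μ₂ ρ x y) y := by
  have hs : 0 < 1 - ρ ^ 2 := by nlinarith
  have hw : 0 < Real.sqrt (1 - ρ ^ 2) := Real.sqrt_pos.2 hs
  have hy : HasDerivAt (fun y : ℝ => y - μ₂) 1 y := (hasDerivAt_id y).sub_const μ₂
  have hy2 : HasDerivAt (fun y : ℝ => (y - μ₂) ^ 2) ((2:ℕ) * (y - μ₂) ^ 1 * 1) y := hy.pow 2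
  have hcross : HasDerivAt (fun y : ℝ => 2 * ρ * (x - μ₁) * (y - μ₂))
      (2 * ρ * (x - μ₁)) y := by
    simpa using hy.const_mul (2 * ρ * (x - μ₁))
  have hnum : HasDerivAt (fun y : ℝ =>
      -((x - μ₁) ^ 2 - 2 * ρ * (x - μ₁) * (y - μ₂) + (y - μ₂) ^ 2))
      (2 * ρ * (x - μ₁) - 2 * (y - μ₂)) y := by
    exact ((((hasDerivAt_const y ((x - μ₁) ^ 2)).sub hcross).add hy2).neg).congr_deriv
      (by push_cast; ring)
  have hexp : HasDerivAt (fun y : ℝ =>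
      Real.exp (-((x - μ₁) ^ 2 - 2 * ρ * (x - μ₁) * (y - μ₂) + (y - μ₂) ^ 2) /
        (2 * (1 - ρ ^ 2))))
      (Real.exp (-((x - μ₁) ^ 2 - 2 * ρ * (x - μ₁) * (y - μ₂) + (y - μ₂) ^ 2) /
        (2 * (1 - ρ ^ 2))) * ((2 * ρ * (x - μ₁) - 2 * (y - μ₂)) / (2 * (1 - ρ ^ 2)))) y :=
    (hnum.div_const _).exp
  have hR : HasDerivAt (fun y : ℝ => (ρ * (y - μ₂) - (x - μ₁)) / (1 - ρ ^ 2))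
      (ρ / (1 - ρ ^ 2)) y := by
    exact (((hy.const_mul ρ).sub_const _).div_const _).congr_deriv (by ring)
  have hmain := (hexp.const_mul ((2 * Real.pi * Real.sqrt (1 - ρ ^ 2))⁻¹)).mul hR
  refine hmain.congr_deriv ?_
  unfold Dfun bvnPDF
  field_simp
  ring

lemma hasDerivAt_bvn_rho (μ₁ μ₂ x y : ℝ) {ρ : ℝ} (hρ : ρ ^ 2 < 1) :
    HasDerivAt (fun r => bvnPDF μ₁ μ₂ r x y) (Dfun μ₁ μ₂ ρ x y) ρ := by
  have hs : 0 < 1 - ρ ^ 2 := by nlinarith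
  have hw : 0 < Real.sqrt (1 - ρ ^ 2) := Real.sqrt_pos.2 hs
  have hpi : (0:ℝ) < 2 * Real.pi := by positivity
  have h1 : HasDerivAt (fun r : ℝ => 1 - r ^ 2) (-(2 * ρ)) ρ := by
    simpa using ((hasDerivAt_pow 2 ρ).const_sub 1)
  -- derivative of r ↦ sqrt (1 - r^2)
  have h2 : HasDerivAt (fun r : ℝ => Real.sqrt (1 - r ^ 2))
      (1 / (2 * Real.sqrt (1 - ρ ^ 2)) * (-(2 * ρ))) ρ := by
    exact (Real.hasDerivAt_sqrt (ne_of_gt hs)).comp ρ h1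
  -- derivative of r ↦ (2π sqrt(1-r^2))⁻¹
  have h3 : HasDerivAt (fun r : ℝ => 2 * Real.pi * Real.sqrt (1 - r ^ 2))
      (2 * Real.pi * (1 / (2 * Real.sqrt (1 - ρ ^ 2)) * (-(2 * ρ)))) ρ := h2.const_mul _
  have h4 : HasDerivAt (fun r : ℝ => (2 * Real.pi * Real.sqrt (1 - r ^ 2))⁻¹)
      (-(2 * Real.pi * (1 / (2 * Real.sqrt (1 - ρ ^ 2)) * (-(2 * ρ)))) /
        (2 * Real.pi * Real.sqrt (1 - ρ ^ 2)) ^ 2) ρ := h3.inv (by positivity)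
  -- derivative of exponent
  have hnum : HasDerivAt (fun r : ℝ =>
      -((x - μ₁) ^ 2 - 2 * r * (x - μ₁) * (y - μ₂) + (y - μ₂) ^ 2))
      (2 * (x - μ₁) * (y - μ₂)) ρ := by
    have hlin : HasDerivAt (fun r : ℝ => 2 * r * (x - μ₁) * (y - μ₂))
        (2 * (x - μ₁) * (y - μ₂)) ρ := by
      have h := (hasDerivAt_id ρ).const_mul (2 * (x - μ₁) * (y - μ₂))
      have heq : (fun r : ℝ => 2 * (x - μ₁) * (y - μ₂) * id r)
          = fun r : ℝ => 2 * r * (x - μ₁) * (y - μ₂) := by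
        funext r; simp [id]; ring
      rw [heq] at h
      simpa using h
    exact (((hasDerivAt_const ρ ((x - μ₁) ^ 2)).sub hlin).add_const ((y - μ₂) ^ 2)).neg.congr_deriv
      (by ring)
  have hden : HasDerivAt (fun r : ℝ => 2 * (1 - r ^ 2)) (2 * (-(2 * ρ))) ρ := h1.const_mul 2
  have hexp : HasDerivAt (fun r : ℝ =>
      Real.exp (-((x - μ₁) ^ 2 - 2 * r * (x - μ₁) * (y - μ₂) + (y - μ₂) ^ 2) / (2 * (1 - r ^ 2))))
      (Real.exp (-((x - μ₁) ^ 2 - 2 * ρ * (x - μ₁) * (y - μ₂) + (y - μ₂) ^ 2) / (2 * (1 - ρ ^ 2))) *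
        ((2 * (x - μ₁) * (y - μ₂) * (2 * (1 - ρ ^ 2)) -
          -((x - μ₁) ^ 2 - 2 * ρ * (x - μ₁) * (y - μ₂) + (y - μ₂) ^ 2) * (2 * (-(2 * ρ)))) /
          (2 * (1 - ρ ^ 2)) ^ 2)) ρ :=
    (hnum.div hden (by positivity)).exp
  have hmain := h4.mul hexp
  refine hmain.congr_deriv ?_
  unfold Dfun bvnPDF
  have hww : Real.sqrt (1 - ρ ^ 2) * Real.sqrt (1 - ρ ^ 2) = 1 - ρ ^ 2 :=
    Real.mul_self_sqrt hs.le
  set X := Real.exp (-((x - μ₁) ^ 2 - 2 * ρ * (x - μ₁) * (y - μ₂) + (y - μ₂) ^ 2) /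
    (2 * (1 - ρ ^ 2))) with hX
  set w := Real.sqrt (1 - ρ ^ 2) with hwdef
  rw [show (1 : ℝ) - ρ ^ 2 = w * w from hww.symm]
  have hw0 : w ≠ 0 := ne_of_gt hw
  field_simp
  ring

lemma abound_pos {r : ℝ} (hr : r < 1) : 0 < abound r := by
  unfold abound; linarith

lemma bound_helper {r ρ u v R : ℝ} (h0 : 0 ≤ r) (hr : r < 1) (hρ : |ρ| ≤ r)
    (hR : |R| ≤ 4 / (1 - r ^ 2) ^ 2 * (1 + (u ^ 2 + v ^ 2))) :
    |(2 * Real.pi * Real.sqrt (1 - ρ ^ 2))⁻¹ *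
        Real.exp (-(u ^ 2 - 2 * ρ * u * v + v ^ 2) / (2 * (1 - ρ ^ 2))) * R|
      ≤ Cbound r * (Real.exp (-abound r * u ^ 2) * Real.exp (-abound r * v ^ 2)) := by
  obtain ⟨hρ1, hρ2⟩ := abs_le.1 hρ
  have hr2 : r ^ 2 < 1 := by nlinarith
  have hρsq : ρ ^ 2 ≤ r ^ 2 := by nlinarith
  have hs : 0 < 1 - ρ ^ 2 := by nlinarith
  have hs0 : 0 < 1 - r ^ 2 := by nlinarith
  have hss : 1 - r ^ 2 ≤ 1 - ρ ^ 2 := by nlinarith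
  have hs1 : 1 - ρ ^ 2 ≤ 1 := by nlinarith
  have hT : (0:ℝ) ≤ u ^ 2 + v ^ 2 := by positivity
  have hb : (0:ℝ) < (1 - r) / 2 := by linarith
  have hE1 : (1 - r) * (u ^ 2 + v ^ 2) ≤ u ^ 2 - 2 * ρ * u * v + v ^ 2 := by
    nlinarith [mul_nonneg (sub_nonneg.2 hρ2) (sq_nonneg (u + v)),
      mul_nonneg (by linarith : (0:ℝ) ≤ r + ρ) (sq_nonneg (u - v))]
  have hE0 : 0 ≤ u ^ 2 - 2 * ρ * u * v + v ^ 2 := by nlinarith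
  -- exponential bound
  have hexp : Real.exp (-(u ^ 2 - 2 * ρ * u * v + v ^ 2) / (2 * (1 - ρ ^ 2)))
      ≤ Real.exp (-((1 - r) / 2 * (u ^ 2 + v ^ 2))) := by
    apply Real.exp_le_exp.2
    rw [neg_div, neg_le_neg_iff, le_div_iff₀ (by positivity)]
    nlinarith [mul_nonneg (mul_nonneg hb.le hT) (sq_nonneg ρ)]
  have habs : |(2 * Real.pi * Real.sqrt (1 - ρ ^ 2))⁻¹ *
      Real.exp (-(u ^ 2 - 2 * ρ * u * v + v ^ 2) / (2 * (1 - ρ ^ 2))) * R|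
      = (2 * Real.pi * Real.sqrt (1 - ρ ^ 2))⁻¹ *
        Real.exp (-(u ^ 2 - 2 * ρ * u * v + v ^ 2) / (2 * (1 - ρ ^ 2))) * |R| := by
    rw [abs_mul, abs_mul, abs_of_pos (by positivity), abs_of_pos (Real.exp_pos _)]
  rw [habs]
  have step1 : (2 * Real.pi * Real.sqrt (1 - ρ ^ 2))⁻¹ *
      Real.exp (-(u ^ 2 - 2 * ρ * u * v + v ^ 2) / (2 * (1 - ρ ^ 2))) * |R|
      ≤ (2 * Real.pi * Real.sqrt (1 - r ^ 2))⁻¹ *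
        Real.exp (-((1 - r) / 2 * (u ^ 2 + v ^ 2))) *
        (4 / (1 - r ^ 2) ^ 2 * (1 + (u ^ 2 + v ^ 2))) := by
    have h1r : (0:ℝ) < Real.sqrt (1 - r ^ 2) := Real.sqrt_pos.2 hs0
    have h2r : Real.sqrt (1 - r ^ 2) ≤ Real.sqrt (1 - ρ ^ 2) := Real.sqrt_le_sqrt hss
    gcongr
  refine step1.trans ?_
  -- key scalar inequality
  have key : (1 + (u ^ 2 + v ^ 2)) * Real.exp (-((1 - r) / 2 * (u ^ 2 + v ^ 2)))
      ≤ (1 + 4 / (1 - r)) * (Real.exp (-abound r * u ^ 2) * Real.exp (-abound r * v ^ 2)) := by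
    rw [← Real.exp_add]
    have h1mr : (0:ℝ) < 1 - r := by linarith
    have hgrow : (1 + (u ^ 2 + v ^ 2))
        ≤ (1 + 4 / (1 - r)) * Real.exp ((1 - r) / 4 * (u ^ 2 + v ^ 2)) := by
      set T := u ^ 2 + v ^ 2 with hTdef
      set q : ℝ := (1 - r) / 4 with hq
      set K : ℝ := 4 / (1 - r) with hK
      have hqpos : 0 < q := by rw [hq]; linarith
      have hKpos : 0 < K := by rw [hK]; exact div_pos (by norm_num) h1mr
      have hKq : K * q = 1 := by rw [hK, hq]; field_simp
      have hKqT : K * (q * T) = T := by rw [← mul_assoc, hKq, one_mul]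
      have he : q * T + 1 ≤ Real.exp (q * T) := Real.add_one_le_exp _
      have ha := mul_le_mul_of_nonneg_left he (by linarith : (0:ℝ) ≤ 1 + K)
      have hexpand : (1 + K) * (q * T + 1) = q * T + 1 + K * (q * T) + K := by ring
      rw [hexpand] at ha
      have hqT : 0 ≤ q * T := mul_nonneg hqpos.le hT
      linarith
    calc (1 + (u ^ 2 + v ^ 2)) * Real.exp (-((1 - r) / 2 * (u ^ 2 + v ^ 2)))
        ≤ ((1 + 4 / (1 - r)) * Real.exp ((1 - r) / 4 * (u ^ 2 + v ^ 2))) *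
          Real.exp (-((1 - r) / 2 * (u ^ 2 + v ^ 2))) := by
          gcongr
      _ = (1 + 4 / (1 - r)) * Real.exp (-abound r * u ^ 2 + -abound r * v ^ 2) := by
          rw [mul_assoc, ← Real.exp_add]
          unfold abound
          congr 2
          ring
  calc (2 * Real.pi * Real.sqrt (1 - r ^ 2))⁻¹ *
        Real.exp (-((1 - r) / 2 * (u ^ 2 + v ^ 2))) *
        (4 / (1 - r ^ 2) ^ 2 * (1 + (u ^ 2 + v ^ 2)))
      = (2 * Real.pi * Real.sqrt (1 - r ^ 2))⁻¹ * (4 / (1 - r ^ 2) ^ 2) *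
        ((1 + (u ^ 2 + v ^ 2)) * Real.exp (-((1 - r) / 2 * (u ^ 2 + v ^ 2)))) := by ring
    _ ≤ (2 * Real.pi * Real.sqrt (1 - r ^ 2))⁻¹ * (4 / (1 - r ^ 2) ^ 2) *
        ((1 + 4 / (1 - r)) * (Real.exp (-abound r * u ^ 2) * Real.exp (-abound r * v ^ 2))) := by
        exact mul_le_mul_of_nonneg_left key (by positivity)
    _ = Cbound r * (Real.exp (-abound r * u ^ 2) * Real.exp (-abound r * v ^ 2)) := by
        unfold Cbound; ring

lemma hR_H {r ρ : ℝ} (h0 : 0 ≤ r) (hr : r < 1) (hρ : |ρ| ≤ r) (u v : ℝ) :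
    |(ρ * v - u) / (1 - ρ ^ 2)| ≤ 4 / (1 - r ^ 2) ^ 2 * (1 + (u ^ 2 + v ^ 2)) := by
  have hρ1 : |ρ| ≤ 1 := hρ.trans hr.le
  have hs : (0:ℝ) < 1 - ρ ^ 2 := by nlinarith [abs_le.1 hρ]
  have hs0 : (0:ℝ) < 1 - r ^ 2 := by nlinarith
  have hss : 1 - r ^ 2 ≤ 1 - ρ ^ 2 := by nlinarith [abs_le.1 hρ]
  have hN : |ρ * v - u| ≤ 1 + (u ^ 2 + v ^ 2) := by
    calc |ρ * v - u| ≤ |ρ * v| + |u| := abs_sub _ _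
      _ = |ρ| * |v| + |u| := by rw [abs_mul]
      _ ≤ 1 + (u ^ 2 + v ^ 2) := by
          nlinarith [sq_nonneg (|u| - 1), sq_nonneg (|v| - 1), sq_abs u, sq_abs v,
            abs_nonneg u, abs_nonneg v, abs_nonneg ρ]
  rw [show 4 / (1 - r ^ 2) ^ 2 * (1 + (u ^ 2 + v ^ 2))
      = 4 * (1 + (u ^ 2 + v ^ 2)) / (1 - r ^ 2) ^ 2 from by ring,
    abs_div, abs_of_pos hs, div_le_div_iff₀ hs (by positivity)]
  nlinarith [mul_le_mul_of_nonneg_right hN (by positivity : (0:ℝ) ≤ (1 - r ^ 2) ^ 2),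
    mul_le_mul_of_nonneg_left
      (show (1 - r ^ 2) ^ 2 ≤ 4 * (1 - ρ ^ 2) by nlinarith [hss, hs0, sq_nonneg r])
      (by nlinarith [sq_nonneg u, sq_nonneg v] : (0:ℝ) ≤ 1 + (u ^ 2 + v ^ 2))]

lemma hR_D {r ρ : ℝ} (h0 : 0 ≤ r) (hr : r < 1) (hρ : |ρ| ≤ r) (u v : ℝ) :
    |(ρ * (1 - ρ ^ 2) + u * v * (1 - ρ ^ 2) - ρ * (u ^ 2 - 2 * ρ * u * v + v ^ 2)) /
        (1 - ρ ^ 2) ^ 2|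
      ≤ 4 / (1 - r ^ 2) ^ 2 * (1 + (u ^ 2 + v ^ 2)) := by
  have hρ1 : |ρ| ≤ 1 := hρ.trans hr.le
  obtain ⟨hm, hp⟩ := abs_le.1 hρ1
  have hs : (0:ℝ) < 1 - ρ ^ 2 := by nlinarith [abs_le.1 hρ]
  have hs1 : 1 - ρ ^ 2 ≤ 1 := by nlinarith
  have hs0 : (0:ℝ) < 1 - r ^ 2 := by nlinarith
  have hss : 1 - r ^ 2 ≤ 1 - ρ ^ 2 := by nlinarith [abs_le.1 hρ]
  have hT : (0:ℝ) ≤ u ^ 2 + v ^ 2 := by positivity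
  have hE0 : 0 ≤ u ^ 2 - 2 * ρ * u * v + v ^ 2 := by
    nlinarith [mul_nonneg (by linarith : (0:ℝ) ≤ 1 - ρ) (sq_nonneg (u - v)),
      mul_nonneg (by linarith : (0:ℝ) ≤ 1 + ρ) (sq_nonneg (u + v))]
  have hE2 : u ^ 2 - 2 * ρ * u * v + v ^ 2 ≤ 2 * (u ^ 2 + v ^ 2) := by
    nlinarith [mul_nonneg (by linarith : (0:ℝ) ≤ 1 - ρ) (sq_nonneg (u + v)),
      mul_nonneg (by linarith : (0:ℝ) ≤ 1 + ρ) (sq_nonneg (u - v))]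
  have hN : |ρ * (1 - ρ ^ 2) + u * v * (1 - ρ ^ 2) -
      ρ * (u ^ 2 - 2 * ρ * u * v + v ^ 2)| ≤ 4 * (1 + (u ^ 2 + v ^ 2)) := by
    have h1 : |ρ * (1 - ρ ^ 2)| ≤ 1 := by
      rw [abs_mul, abs_of_pos hs]
      nlinarith [abs_nonneg ρ]
    have h2 : |u * v * (1 - ρ ^ 2)| ≤ (u ^ 2 + v ^ 2) / 2 := by
      rw [abs_mul, abs_of_pos hs, abs_mul]
      have huv : |u| * |v| ≤ (u ^ 2 + v ^ 2) / 2 := by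
        nlinarith [sq_nonneg (|u| - |v|), sq_abs u, sq_abs v]
      nlinarith [mul_le_mul_of_nonneg_left hs1
        (mul_nonneg (abs_nonneg u) (abs_nonneg v)),
        mul_nonneg (mul_nonneg (abs_nonneg u) (abs_nonneg v)) hs.le]
    have h3 : |ρ * (u ^ 2 - 2 * ρ * u * v + v ^ 2)| ≤ 2 * (u ^ 2 + v ^ 2) := by
      rw [abs_mul, abs_of_nonneg hE0]
      nlinarith [abs_nonneg ρ, hE2, hE0]
    calc |ρ * (1 - ρ ^ 2) + u * v * (1 - ρ ^ 2) - ρ * (u ^ 2 - 2 * ρ * u * v + v ^ 2)|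
        ≤ |ρ * (1 - ρ ^ 2) + u * v * (1 - ρ ^ 2)| + |ρ * (u ^ 2 - 2 * ρ * u * v + v ^ 2)| :=
          abs_sub _ _
      _ ≤ |ρ * (1 - ρ ^ 2)| + |u * v * (1 - ρ ^ 2)| +
          |ρ * (u ^ 2 - 2 * ρ * u * v + v ^ 2)| := by
          linarith [abs_add_le (ρ * (1 - ρ ^ 2)) (u * v * (1 - ρ ^ 2))]
      _ ≤ 4 * (1 + (u ^ 2 + v ^ 2)) := by linarith
  rw [show 4 / (1 - r ^ 2) ^ 2 * (1 + (u ^ 2 + v ^ 2))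
      = 4 * (1 + (u ^ 2 + v ^ 2)) / (1 - r ^ 2) ^ 2 from by ring,
    abs_div, abs_of_pos (by positivity : (0:ℝ) < (1 - ρ ^ 2) ^ 2),
    div_le_div_iff₀ (by positivity) (by positivity)]
  have hsq : (1 - r ^ 2) ^ 2 ≤ (1 - ρ ^ 2) ^ 2 := by nlinarith
  nlinarith [mul_le_mul hN hsq (by positivity)
    (by linarith : (0:ℝ) ≤ 4 * (1 + (u ^ 2 + v ^ 2)))]

lemma abs_bvn_le (μ₁ μ₂ : ℝ) {r ρ : ℝ} (h0 : 0 ≤ r) (hr : r < 1) (hρ : |ρ| ≤ r) (x y : ℝ) :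
    |bvnPDF μ₁ μ₂ ρ x y|
      ≤ Cbound r * (Real.exp (-abound r * (x - μ₁) ^ 2) * Real.exp (-abound r * (y - μ₂) ^ 2)) := by
  have hs0 : (0:ℝ) < 1 - r ^ 2 := by nlinarith
  have hR : |(1:ℝ)| ≤ 4 / (1 - r ^ 2) ^ 2 * (1 + ((x - μ₁) ^ 2 + (y - μ₂) ^ 2)) := by
    rw [abs_one]
    have h1 : (1:ℝ) ≤ 4 / (1 - r ^ 2) ^ 2 := by
      rw [le_div_iff₀ (by positivity)]; nlinarith
    nlinarith [mul_le_mul_of_nonneg_left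
      (show (1:ℝ) ≤ 1 + ((x - μ₁) ^ 2 + (y - μ₂) ^ 2) by
        nlinarith [sq_nonneg (x - μ₁), sq_nonneg (y - μ₂)])
      (by positivity : (0:ℝ) ≤ 4 / (1 - r ^ 2) ^ 2)]
  have h := bound_helper (u := x - μ₁) (v := y - μ₂) h0 hr hρ hR
  rw [mul_one] at h
  exact h

lemma abs_Hfun_le (μ₁ μ₂ : ℝ) {r ρ : ℝ} (h0 : 0 ≤ r) (hr : r < 1) (hρ : |ρ| ≤ r) (x y : ℝ) :
    |Hfun μ₁ μ₂ ρ x y|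
      ≤ Cbound r * (Real.exp (-abound r * (x - μ₁) ^ 2) * Real.exp (-abound r * (y - μ₂) ^ 2)) :=
  bound_helper (u := x - μ₁) (v := y - μ₂) h0 hr hρ (hR_H h0 hr hρ _ _)

lemma abs_Dfun_le (μ₁ μ₂ : ℝ) {r ρ : ℝ} (h0 : 0 ≤ r) (hr : r < 1) (hρ : |ρ| ≤ r) (x y : ℝ) :
    |Dfun μ₁ μ₂ ρ x y|
      ≤ Cbound r * (Real.exp (-abound r * (x - μ₁) ^ 2) * Real.exp (-abound r * (y - μ₂) ^ 2)) :=
  bound_helper (u := x - μ₁) (v := y - μ₂) h0 hr hρ (hR_D h0 hr hρ _ _)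

open scoped Topology

lemma continuous_bvn2 (μ₁ μ₂ ρ : ℝ) : Continuous (fun p : ℝ × ℝ => bvnPDF μ₁ μ₂ ρ p.1 p.2) := by
  unfold bvnPDF
  fun_prop

lemma continuous_D2 (μ₁ μ₂ ρ : ℝ) : Continuous (fun p : ℝ × ℝ => Dfun μ₁ μ₂ ρ p.1 p.2) := by
  unfold Dfun bvnPDF
  fun_prop

lemma continuous_H2 (μ₁ μ₂ ρ : ℝ) : Continuous (fun p : ℝ × ℝ => Hfun μ₁ μ₂ ρ p.1 p.2) := by
  unfold Hfun bvnPDF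
  fun_prop

lemma integrable_gauss1 {a : ℝ} (ha : 0 < a) (C m : ℝ) :
    Integrable (fun t : ℝ => C * Real.exp (-a * (t - m) ^ 2)) :=
  ((integrable_exp_neg_mul_sq ha).comp_sub_right m).const_mul C

lemma integrable_gauss2 {a : ℝ} (ha : 0 < a) (C m₁ m₂ : ℝ) :
    Integrable (fun p : ℝ × ℝ =>
      C * (Real.exp (-a * (p.1 - m₁) ^ 2) * Real.exp (-a * (p.2 - m₂) ^ 2))) := by
  have h1 := (integrable_exp_neg_mul_sq ha).comp_sub_right m₁
  have h2 := (integrable_exp_neg_mul_sq ha).comp_sub_right m₂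
  have h := (h1.mul_prod h2).const_mul C
  rw [MeasureTheory.Measure.volume_eq_prod]
  exact h

lemma integrable2_D (μ₁ μ₂ : ℝ) {ρ : ℝ} (hρ : |ρ| < 1) :
    Integrable (fun p : ℝ × ℝ => Dfun μ₁ μ₂ ρ p.1 p.2) := by
  refine (integrable_gauss2 (abound_pos hρ) (Cbound |ρ|) μ₁ μ₂).mono'
    (continuous_D2 μ₁ μ₂ ρ).aestronglyMeasurable (ae_of_all _ fun p => ?_)
  rw [Real.norm_eq_abs]
  exact abs_Dfun_le μ₁ μ₂ (abs_nonneg ρ) hρ le_rfl p.1 p.2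

lemma integrable2_bvn (μ₁ μ₂ : ℝ) {ρ : ℝ} (hρ : |ρ| < 1) :
    Integrable (fun p : ℝ × ℝ => bvnPDF μ₁ μ₂ ρ p.1 p.2) := by
  refine (integrable_gauss2 (abound_pos hρ) (Cbound |ρ|) μ₁ μ₂).mono'
    (continuous_bvn2 μ₁ μ₂ ρ).aestronglyMeasurable (ae_of_all _ fun p => ?_)
  rw [Real.norm_eq_abs]
  exact abs_bvn_le μ₁ μ₂ (abs_nonneg ρ) hρ le_rfl p.1 p.2

lemma integrable_D_y (μ₁ μ₂ : ℝ) {ρ : ℝ} (hρ : |ρ| < 1) (x : ℝ) :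
    Integrable (fun y : ℝ => Dfun μ₁ μ₂ ρ x y) := by
  refine (integrable_gauss1 (abound_pos hρ)
    (Cbound |ρ| * Real.exp (-abound |ρ| * (x - μ₁) ^ 2)) μ₂).mono'
    (((continuous_D2 μ₁ μ₂ ρ).comp (Continuous.prodMk_right x)).aestronglyMeasurable)
    (ae_of_all _ fun y => ?_)
  rw [Real.norm_eq_abs]
  calc |Dfun μ₁ μ₂ ρ x y| ≤ Cbound |ρ| *
      (Real.exp (-abound |ρ| * (x - μ₁) ^ 2) * Real.exp (-abound |ρ| * (y - μ₂) ^ 2)) :=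
        abs_Dfun_le μ₁ μ₂ (abs_nonneg ρ) hρ le_rfl x y
    _ = Cbound |ρ| * Real.exp (-abound |ρ| * (x - μ₁) ^ 2) *
        Real.exp (-abound |ρ| * (y - μ₂) ^ 2) := by ring

lemma integrable_H_x (μ₁ μ₂ : ℝ) {ρ : ℝ} (hρ : |ρ| < 1) (b : ℝ) :
    Integrable (fun x : ℝ => Hfun μ₁ μ₂ ρ x b) := by
  refine (integrable_gauss1 (abound_pos hρ)
    (Cbound |ρ| * Real.exp (-abound |ρ| * (b - μ₂) ^ 2)) μ₁).mono'
    (((continuous_H2 μ₁ μ₂ ρ).comp (by fun_prop : Continuous (fun x : ℝ => (x, b)))).aestronglyMeasurable)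
    (ae_of_all _ fun x => ?_)
  rw [Real.norm_eq_abs]
  calc |Hfun μ₁ μ₂ ρ x b| ≤ Cbound |ρ| *
      (Real.exp (-abound |ρ| * (x - μ₁) ^ 2) * Real.exp (-abound |ρ| * (b - μ₂) ^ 2)) :=
        abs_Hfun_le μ₁ μ₂ (abs_nonneg ρ) hρ le_rfl x b
    _ = Cbound |ρ| * Real.exp (-abound |ρ| * (b - μ₂) ^ 2) *
        Real.exp (-abound |ρ| * (x - μ₁) ^ 2) := by ring

lemma sq_tendsto_atTop (m : ℝ) : Tendsto (fun t : ℝ => (t - m) ^ 2) atTop atTop := by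
  have h : Tendsto (fun t : ℝ => t - m) atTop atTop := by
    simpa [sub_eq_add_neg] using tendsto_atTop_add_const_right atTop (-m) tendsto_id
  exact (tendsto_pow_atTop two_ne_zero).comp h

lemma sq_tendsto_atBot (m : ℝ) : Tendsto (fun t : ℝ => (t - m) ^ 2) atBot atTop := by
  have h : Tendsto (fun t : ℝ => t - m) atBot atBot := by
    simpa [sub_eq_add_neg] using tendsto_atBot_add_const_right atBot (-m) tendsto_id
  have h1 : Tendsto (fun t : ℝ => |t - m|) atBot atTop := tendsto_abs_atBot_atTop.comp h
  have h2 := (tendsto_pow_atTop two_ne_zero).comp h1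
  have heq : (fun t : ℝ => |t - m| ^ 2) = fun t : ℝ => (t - m) ^ 2 := by
    funext t; exact sq_abs _
  rw [← heq]
  exact h2

lemma tendsto_gauss_zero {a m C : ℝ} (ha : 0 < a) {l : Filter ℝ}
    (hl : Tendsto (fun t : ℝ => (t - m) ^ 2) l atTop) :
    Tendsto (fun t : ℝ => C * Real.exp (-a * (t - m) ^ 2)) l (𝓝 0) := by
  have h1 : Tendsto (fun t : ℝ => -a * (t - m) ^ 2) l atBot :=
    Tendsto.neg_mul_atTop (by linarith : -a < 0) tendsto_const_nhds hl
  have h2 := Real.tendsto_exp_atBot.comp h1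
  simpa using h2.const_mul C

lemma tendsto_Hfun_y (μ₁ μ₂ x : ℝ) {ρ : ℝ} (hρ : |ρ| < 1) {l : Filter ℝ}
    (hl : Tendsto (fun t : ℝ => (t - μ₂) ^ 2) l atTop) :
    Tendsto (fun y => Hfun μ₁ μ₂ ρ x y) l (𝓝 0) := by
  refine squeeze_zero_norm (fun y => ?_)
    (tendsto_gauss_zero (C := Cbound |ρ| * Real.exp (-abound |ρ| * (x - μ₁) ^ 2))
      (abound_pos hρ) hl)
  rw [Real.norm_eq_abs]
  calc |Hfun μ₁ μ₂ ρ x y| ≤ Cbound |ρ| *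
      (Real.exp (-abound |ρ| * (x - μ₁) ^ 2) * Real.exp (-abound |ρ| * (y - μ₂) ^ 2)) :=
        abs_Hfun_le μ₁ μ₂ (abs_nonneg ρ) hρ le_rfl x y
    _ = _ := by ring

lemma tendsto_bvn_x (μ₁ μ₂ b : ℝ) {ρ : ℝ} (hρ : |ρ| < 1) {l : Filter ℝ}
    (hl : Tendsto (fun t : ℝ => (t - μ₁) ^ 2) l atTop) :
    Tendsto (fun x => bvnPDF μ₁ μ₂ ρ x b) l (𝓝 0) := by
  refine squeeze_zero_norm (fun x => ?_)
    (tendsto_gauss_zero (C := Cbound |ρ| * Real.exp (-abound |ρ| * (b - μ₂) ^ 2))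
      (abound_pos hρ) hl)
  rw [Real.norm_eq_abs]
  calc |bvnPDF μ₁ μ₂ ρ x b| ≤ Cbound |ρ| *
      (Real.exp (-abound |ρ| * (x - μ₁) ^ 2) * Real.exp (-abound |ρ| * (b - μ₂) ^ 2)) :=
        abs_bvn_le μ₁ μ₂ (abs_nonneg ρ) hρ le_rfl x b
    _ = _ := by ring

lemma integral_S_D (μ₁ μ₂ : ℝ) {ρ : ℝ} (hρ : |ρ| < 1) {c : ℝ} (hc : 0 ≤ c) (x : ℝ) :
    ∫ y in Iio (-c) ∪ Ioi c, Dfun μ₁ μ₂ ρ x y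
      = Hfun μ₁ μ₂ ρ x (-c) - Hfun μ₁ μ₂ ρ x c := by
  have hρ2 : ρ ^ 2 < 1 := by nlinarith [sq_abs ρ, abs_nonneg ρ]
  have hint := integrable_D_y μ₁ μ₂ hρ x
  have hdisj : Disjoint (Iio (-c)) (Ioi c) := by
    rw [Set.disjoint_left]
    intro y h1 h2
    simp only [mem_Iio, mem_Ioi] at h1 h2
    linarith
  rw [setIntegral_union hdisj measurableSet_Ioi hint.integrableOn hint.integrableOn]
  have e1 : ∫ y in Iio (-c), Dfun μ₁ μ₂ ρ x y = ∫ y in Iic (-c), Dfun μ₁ μ₂ ρ x y :=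
    setIntegral_congr_set Iio_ae_eq_Iic
  have e2 : ∫ y in Iic (-c), Dfun μ₁ μ₂ ρ x y = Hfun μ₁ μ₂ ρ x (-c) - 0 :=
    integral_Iic_of_hasDerivAt_of_tendsto
      (hasDerivAt_Hfun_y μ₁ μ₂ ρ x (-c) hρ2).continuousAt.continuousWithinAt
      (fun y _ => hasDerivAt_Hfun_y μ₁ μ₂ ρ x y hρ2)
      hint.integrableOn
      (tendsto_Hfun_y μ₁ μ₂ x hρ (sq_tendsto_atBot μ₂))
  have e3 : ∫ y in Ioi c, Dfun μ₁ μ₂ ρ x y = 0 - Hfun μ₁ μ₂ ρ x c :=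
    integral_Ioi_of_hasDerivAt_of_tendsto
      (hasDerivAt_Hfun_y μ₁ μ₂ ρ x c hρ2).continuousAt.continuousWithinAt
      (fun y _ => hasDerivAt_Hfun_y μ₁ μ₂ ρ x y hρ2)
      hint.integrableOn
      (tendsto_Hfun_y μ₁ μ₂ x hρ (sq_tendsto_atTop μ₂))
  rw [e1, e2, e3]
  ring

lemma integral_S_H (μ₁ μ₂ : ℝ) {ρ : ℝ} (hρ : |ρ| < 1) {c : ℝ} (hc : 0 ≤ c) (b : ℝ) :
    ∫ x in Iio (-c) ∪ Ioi c, Hfun μ₁ μ₂ ρ x b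
      = bvnPDF μ₁ μ₂ ρ (-c) b - bvnPDF μ₁ μ₂ ρ c b := by
  have hρ2 : ρ ^ 2 < 1 := by nlinarith [sq_abs ρ, abs_nonneg ρ]
  have hint := integrable_H_x μ₁ μ₂ hρ b
  have hdisj : Disjoint (Iio (-c)) (Ioi c) := by
    rw [Set.disjoint_left]
    intro y h1 h2
    simp only [mem_Iio, mem_Ioi] at h1 h2
    linarith
  rw [setIntegral_union hdisj measurableSet_Ioi hint.integrableOn hint.integrableOn]
  have e1 : ∫ x in Iio (-c), Hfun μ₁ μ₂ ρ x b = ∫ x in Iic (-c), Hfun μ₁ μ₂ ρ x b :=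
    setIntegral_congr_set Iio_ae_eq_Iic
  have e2 : ∫ x in Iic (-c), Hfun μ₁ μ₂ ρ x b = bvnPDF μ₁ μ₂ ρ (-c) b - 0 :=
    integral_Iic_of_hasDerivAt_of_tendsto
      (hasDerivAt_bvn_x μ₁ μ₂ ρ (-c) b hρ2).continuousAt.continuousWithinAt
      (fun x _ => hasDerivAt_bvn_x μ₁ μ₂ ρ x b hρ2)
      hint.integrableOn
      (tendsto_bvn_x μ₁ μ₂ b hρ (sq_tendsto_atBot μ₁))
  have e3 : ∫ x in Ioi c, Hfun μ₁ μ₂ ρ x b = 0 - bvnPDF μ₁ μ₂ ρ c b :=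
    integral_Ioi_of_hasDerivAt_of_tendsto
      (hasDerivAt_bvn_x μ₁ μ₂ ρ c b hρ2).continuousAt.continuousWithinAt
      (fun x _ => hasDerivAt_bvn_x μ₁ μ₂ ρ x b hρ2)
      hint.integrableOn
      (tendsto_bvn_x μ₁ μ₂ b hρ (sq_tendsto_atTop μ₁))
  rw [e1, e2, e3]
  ring

lemma integral_D_region (μ₁ μ₂ : ℝ) {ρ : ℝ} (hρ : |ρ| < 1) {c : ℝ} (hc : 0 ≤ c) :
    ∫ p in {p : ℝ × ℝ | c < |p.1| ∧ c < |p.2|}, Dfun μ₁ μ₂ ρ p.1 p.2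
      = bvnPDF μ₁ μ₂ ρ c c + bvnPDF μ₁ μ₂ ρ (-c) (-c)
        - bvnPDF μ₁ μ₂ ρ c (-c) - bvnPDF μ₁ μ₂ ρ (-c) c := by
  have habs : ∀ t : ℝ, c < |t| ↔ t < -c ∨ c < t := by
    intro t
    rw [lt_abs]
    constructor
    · rintro (h | h)
      · right; exact h
      · left; linarith
    · rintro (h | h)
      · right; linarith
      · left; exact h
  have hregion : {p : ℝ × ℝ | c < |p.1| ∧ c < |p.2|}
      = (Iio (-c) ∪ Ioi c) ×ˢ (Iio (-c) ∪ Ioi c) := by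
    ext p
    simp only [mem_setOf_eq, mem_prod, mem_union, mem_Iio, mem_Ioi]
    rw [habs p.1, habs p.2]
  have hint2 := integrable2_D μ₁ μ₂ hρ
  rw [Measure.volume_eq_prod] at hint2
  rw [hregion, Measure.volume_eq_prod, setIntegral_prod _ hint2.integrableOn]
  have hinner : (fun x => ∫ y in Iio (-c) ∪ Ioi c, Dfun μ₁ μ₂ ρ x y)
      =ᵐ[volume.restrict (Iio (-c) ∪ Ioi c)]
      (fun x => Hfun μ₁ μ₂ ρ x (-c) - Hfun μ₁ μ₂ ρ x c) :=
    ae_of_all _ fun x => integral_S_D μ₁ μ₂ hρ hc x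
  rw [integral_congr_ae hinner,
    integral_sub (integrable_H_x μ₁ μ₂ hρ (-c)).integrableOn
      (integrable_H_x μ₁ μ₂ hρ c).integrableOn,
    integral_S_H μ₁ μ₂ hρ hc (-c), integral_S_H μ₁ μ₂ hρ hc c]
  ring

theorem statement4 (t z μ₁ μ₂ ρ : ℝ) (ht : t ∈ Set.Ioo (0 : ℝ) 1)
    (hz : stdCDF z = t / 2) (hρ : ρ ∈ Set.Ioo (-1 : ℝ) 1) :
    HasDerivAt (fun r => quadProb μ₁ μ₂ z r)
      ((2 * Real.pi * Real.sqrt (1 - ρ ^ 2))⁻¹ *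
        (Real.exp (-((μ₁ + z) ^ 2 + (μ₂ + z) ^ 2 - 2 * ρ * (μ₁ + z) * (μ₂ + z)) /
            (2 * (1 - ρ ^ 2)))
          + Real.exp (-((μ₁ - z) ^ 2 + (μ₂ - z) ^ 2 - 2 * ρ * (μ₁ - z) * (μ₂ - z)) /
            (2 * (1 - ρ ^ 2)))
          - Real.exp (-((μ₁ + z) ^ 2 + (μ₂ - z) ^ 2 - 2 * ρ * (μ₁ + z) * (μ₂ - z)) /
            (2 * (1 - ρ ^ 2)))
          - Real.exp (-((μ₁ - z) ^ 2 + (μ₂ + z) ^ 2 - 2 * ρ * (μ₁ - z) * (μ₂ + z)) /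
            (2 * (1 - ρ ^ 2))))) ρ := by
  obtain ⟨hρ1, hρ2⟩ := hρ
  have hρa : |ρ| < 1 := abs_lt.2 ⟨hρ1, hρ2⟩
  set r : ℝ := (1 + |ρ|) / 2 with hrdef
  have hr0 : 0 ≤ r := by positivity
  have hr1 : r < 1 := by rw [hrdef]; linarith
  have hεpos : (0:ℝ) < (1 - |ρ|) / 2 := by linarith
  have hball : ∀ ρ' ∈ Metric.ball ρ ((1 - |ρ|) / 2), |ρ'| ≤ r := by
    intro ρ' h
    rw [Metric.mem_ball, Real.dist_eq] at h
    have h2 := abs_sub_abs_le_abs_sub ρ' ρ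
    rw [hrdef]
    linarith
  have hball1 : ∀ ρ' ∈ Metric.ball ρ ((1 - |ρ|) / 2), ρ' ^ 2 < 1 := by
    intro ρ' h
    have := hball ρ' h
    nlinarith [sq_abs ρ', abs_nonneg ρ']
  have key := hasDerivAt_integral_of_dominated_loc_of_deriv_le
    (μ := volume.restrict {p : ℝ × ℝ | |z| < |p.1| ∧ |z| < |p.2|})
    (F := fun r (p : ℝ × ℝ) => bvnPDF μ₁ μ₂ r p.1 p.2)
    (F' := fun r (p : ℝ × ℝ) => Dfun μ₁ μ₂ r p.1 p.2)
    (x₀ := ρ)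
    (bound := fun p : ℝ × ℝ => Cbound r *
      (Real.exp (-abound r * (p.1 - μ₁) ^ 2) * Real.exp (-abound r * (p.2 - μ₂) ^ 2)))
    (Metric.ball_mem_nhds ρ hεpos)
    (Eventually.of_forall fun r' => (continuous_bvn2 μ₁ μ₂ r').aestronglyMeasurable.restrict)
    ((integrable2_bvn μ₁ μ₂ hρa).restrict)
    ((continuous_D2 μ₁ μ₂ ρ).aestronglyMeasurable.restrict)
    (ae_of_all _ fun p r' hr' => by
      rw [Real.norm_eq_abs]
      exact abs_Dfun_le μ₁ μ₂ hr0 hr1 (hball r' hr') p.1 p.2)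
    ((integrable_gauss2 (abound_pos hr1) (Cbound r) μ₁ μ₂).restrict)
    (ae_of_all _ fun p r' hr' => hasDerivAt_bvn_rho μ₁ μ₂ p.1 p.2 (hball1 r' hr'))
  have key2 := key.2
  have hval := integral_D_region μ₁ μ₂ hρa (abs_nonneg z)
  have hgoal : (2 * Real.pi * Real.sqrt (1 - ρ ^ 2))⁻¹ *
        (Real.exp (-((μ₁ + z) ^ 2 + (μ₂ + z) ^ 2 - 2 * ρ * (μ₁ + z) * (μ₂ + z)) /
            (2 * (1 - ρ ^ 2)))
          + Real.exp (-((μ₁ - z) ^ 2 + (μ₂ - z) ^ 2 - 2 * ρ * (μ₁ - z) * (μ₂ - z)) /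
            (2 * (1 - ρ ^ 2)))
          - Real.exp (-((μ₁ + z) ^ 2 + (μ₂ - z) ^ 2 - 2 * ρ * (μ₁ + z) * (μ₂ - z)) /
            (2 * (1 - ρ ^ 2)))
          - Real.exp (-((μ₁ - z) ^ 2 + (μ₂ + z) ^ 2 - 2 * ρ * (μ₁ - z) * (μ₂ + z)) /
            (2 * (1 - ρ ^ 2))))
      = bvnPDF μ₁ μ₂ ρ |z| |z| + bvnPDF μ₁ μ₂ ρ (-|z|) (-|z|)
        - bvnPDF μ₁ μ₂ ρ |z| (-|z|) - bvnPDF μ₁ μ₂ ρ (-|z|) |z| := by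
    rcases abs_cases z with ⟨h1, _⟩ | ⟨h1, _⟩ <;> rw [h1] <;> unfold bvnPDF <;>
    · rw [show Real.exp (-((μ₁ + z) ^ 2 + (μ₂ + z) ^ 2 - 2 * ρ * (μ₁ + z) * (μ₂ + z)) /
            (2 * (1 - ρ ^ 2)))
          = Real.exp (-((-z - μ₁) ^ 2 - 2 * ρ * (-z - μ₁) * (-z - μ₂) + (-z - μ₂) ^ 2) /
            (2 * (1 - ρ ^ 2))) from by congr 1; ring,
        show Real.exp (-((μ₁ - z) ^ 2 + (μ₂ - z) ^ 2 - 2 * ρ * (μ₁ - z) * (μ₂ - z)) /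
            (2 * (1 - ρ ^ 2)))
          = Real.exp (-((z - μ₁) ^ 2 - 2 * ρ * (z - μ₁) * (z - μ₂) + (z - μ₂) ^ 2) /
            (2 * (1 - ρ ^ 2))) from by congr 1; ring,
        show Real.exp (-((μ₁ + z) ^ 2 + (μ₂ - z) ^ 2 - 2 * ρ * (μ₁ + z) * (μ₂ - z)) /
            (2 * (1 - ρ ^ 2)))
          = Real.exp (-((-z - μ₁) ^ 2 - 2 * ρ * (-z - μ₁) * (z - μ₂) + (z - μ₂) ^ 2) /
            (2 * (1 - ρ ^ 2))) from by congr 1; ring,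
        show Real.exp (-((μ₁ - z) ^ 2 + (μ₂ + z) ^ 2 - 2 * ρ * (μ₁ - z) * (μ₂ + z)) /
            (2 * (1 - ρ ^ 2)))
          = Real.exp (-((z - μ₁) ^ 2 - 2 * ρ * (z - μ₁) * (-z - μ₂) + (-z - μ₂) ^ 2) /
            (2 * (1 - ρ ^ 2))) from by congr 1; ring]
      ring_nf
  rw [hgoal, ← hval]
  exact key2
end

section
/- Fix z, μ, x ∈ ℝ and define F : (−1,1) → ℝ by F(ρ) = Φ((z − μ − ρx)/√(1−ρ²)). Then the first three derivatives of F at ρ = 0 are F′(0) = −φ(z−μ)·x, F″(0) = −φ(z−μ)(z−μ)·(x² − 1), and F‴(0) = −φ(z−μ)[(z−μ)² − 1]·(x³ − 3x). -/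
open MeasureTheory Real Set Filter Asymptotics Topology

namespace Statement7Aux

lemma integrable_stdPDF : Integrable stdPDF := by
  have h : Integrable (fun t : ℝ => Real.exp (-(1/2 : ℝ) * t ^ 2)) :=
    integrable_exp_neg_mul_sq (by norm_num)
  have h2 := h.const_mul ((Real.sqrt (2 * Real.pi))⁻¹)
  refine h2.congr (Filter.Eventually.of_forall fun t => ?_)
  simp only [stdPDF]
  ring_nf

lemma continuous_stdPDF : Continuous stdPDF := by
  unfold stdPDF; fun_prop

lemma hasDerivAt_stdCDF (y : ℝ) : HasDerivAt stdCDF (stdPDF y) y := by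
  have key : ∀ b : ℝ, stdCDF b = stdCDF 0 + ∫ u in (0:ℝ)..b, stdPDF u := by
    intro b
    have := intervalIntegral.integral_Iic_sub_Iic (μ := volume) (f := stdPDF)
      (a := (0:ℝ)) (b := b) integrable_stdPDF.integrableOn integrable_stdPDF.integrableOn
    have e1 : (∫ u in Iic b, stdPDF u) = stdCDF b := integral_Iic_eq_integral_Iio
    have e2 : (∫ u in Iic (0:ℝ), stdPDF u) = stdCDF 0 := integral_Iic_eq_integral_Iio
    rw [e1, e2] at this
    linarith
  have hD : HasDerivAt (fun b : ℝ => stdCDF 0 + ∫ u in (0:ℝ)..b, stdPDF u) (stdPDF y) y := by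
    refine (HasDerivAt.const_add _ ?_)
    refine intervalIntegral.integral_hasDerivAt_right
      (integrable_stdPDF.intervalIntegrable)
      (continuous_stdPDF.aestronglyMeasurable.stronglyMeasurableAtFilter)
      (continuous_stdPDF.continuousAt)
  exact hD.congr_of_eventuallyEq (Filter.Eventually.of_forall key)

lemma hasDerivAt_stdPDF (t : ℝ) : HasDerivAt stdPDF (-t * stdPDF t) t := by
  have h1 : HasDerivAt (fun s : ℝ => -s ^ 2 / 2) (-t) t := by
    have := ((hasDerivAt_pow 2 t).neg).div_const 2
    convert this using 1 <;> try rfl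
    try simp; try ring
  have h2 := (h1.exp).const_mul ((Real.sqrt (2 * Real.pi))⁻¹)
  have : HasDerivAt (fun s : ℝ => (Real.sqrt (2 * Real.pi))⁻¹ * Real.exp (-s ^ 2 / 2))
      (-t * stdPDF t) t := by
    convert h2 using 1 <;> try rfl
    simp only [stdPDF]; ring
  exact this

noncomputable def hh (ρ : ℝ) : ℝ := (Real.sqrt (1 - ρ ^ 2))⁻¹

lemma one_sub_sq_pos {ρ : ℝ} (hρ : ρ ∈ Ioo (-1:ℝ) 1) : 0 < 1 - ρ ^ 2 := by
  nlinarith [hρ.1, hρ.2]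

lemma hasDerivAt_hh {ρ : ℝ} (hρ : ρ ∈ Ioo (-1:ℝ) 1) :
    HasDerivAt hh (ρ * hh ρ ^ 3) ρ := by
  have hu : 0 < 1 - ρ ^ 2 := one_sub_sq_pos hρ
  have hs : 0 < Real.sqrt (1 - ρ ^ 2) := Real.sqrt_pos.mpr hu
  have h1 : HasDerivAt (fun s : ℝ => 1 - s ^ 2) (-(2 * ρ)) ρ := by
    have := (hasDerivAt_pow 2 ρ).const_sub 1
    convert this using 1 <;> try rfl
    try simp; try ring
  have h2 := h1.sqrt (ne_of_gt hu)
  have h3 := h2.inv (ne_of_gt hs)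
  have : HasDerivAt (fun s : ℝ => (Real.sqrt (1 - s ^ 2))⁻¹) (ρ * hh ρ ^ 3) ρ := by
    convert h3 using 1 <;> try rfl
    rw [hh]
    field_simp
  exact this

lemma hh_zero : hh 0 = 1 := by simp [hh]

/-- inner function -/
noncomputable def gg (a x ρ : ℝ) : ℝ := (a - ρ * x) * hh ρ

noncomputable def G1 (a x ρ : ℝ) : ℝ := -x * hh ρ + (a - ρ * x) * (ρ * hh ρ ^ 3)

noncomputable def G2 (a x ρ : ℝ) : ℝ :=
  (a - 3 * x * ρ) * hh ρ ^ 3 + 3 * ρ ^ 2 * (a - ρ * x) * hh ρ ^ 5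

noncomputable def D1f (a x ρ : ℝ) : ℝ := stdPDF (gg a x ρ) * G1 a x ρ

noncomputable def D2f (a x ρ : ℝ) : ℝ :=
  stdPDF (gg a x ρ) * (G2 a x ρ - gg a x ρ * G1 a x ρ ^ 2)

lemma hasDerivAt_lin (a x ρ : ℝ) : HasDerivAt (fun s : ℝ => a - s * x) (-x) ρ := by
  have := ((hasDerivAt_id ρ).mul_const x).const_sub a
  simpa using this

lemma hasDerivAt_gg (a x : ℝ) {ρ : ℝ} (hρ : ρ ∈ Ioo (-1:ℝ) 1) :
    HasDerivAt (gg a x) (G1 a x ρ) ρ := by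
  have := (hasDerivAt_lin a x ρ).mul (hasDerivAt_hh hρ)
  convert this using 1 <;> try rfl
  try (simp only [G1]; ring)

lemma hasDerivAt_G1 (a x : ℝ) {ρ : ℝ} (hρ : ρ ∈ Ioo (-1:ℝ) 1) :
    HasDerivAt (G1 a x) (G2 a x ρ) ρ := by
  have hh' := hasDerivAt_hh hρ
  have t1 : HasDerivAt (fun s : ℝ => -x * hh s) (-x * (ρ * hh ρ ^ 3)) ρ := hh'.const_mul (-x)
  have hcube : HasDerivAt (fun s : ℝ => hh s ^ 3) (3 * hh ρ ^ 2 * (ρ * hh ρ ^ 3)) ρ := by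
    have := hh'.pow 3
    convert this using 1 <;> try rfl
    try push_cast; try ring
  have hmid : HasDerivAt (fun s : ℝ => s * hh s ^ 3)
      (1 * hh ρ ^ 3 + ρ * (3 * hh ρ ^ 2 * (ρ * hh ρ ^ 3))) ρ :=
    (hasDerivAt_id ρ).mul hcube
  have t2 := (hasDerivAt_lin a x ρ).mul hmid
  have := t1.add t2
  convert this using 1 <;> try rfl
  try (simp only [G2]; ring)

lemma hasDerivAt_phig (a x : ℝ) {ρ : ℝ} (hρ : ρ ∈ Ioo (-1:ℝ) 1) :
    HasDerivAt (fun s : ℝ => stdPDF (gg a x s))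
      (-(gg a x ρ) * stdPDF (gg a x ρ) * G1 a x ρ) ρ := by
  have := (hasDerivAt_stdPDF (gg a x ρ)).comp ρ (hasDerivAt_gg a x hρ)
  exact this

lemma hasDerivAt_D1 (a x : ℝ) {ρ : ℝ} (hρ : ρ ∈ Ioo (-1:ℝ) 1) :
    HasDerivAt (D1f a x) (D2f a x ρ) ρ := by
  have := (hasDerivAt_phig a x hρ).mul (hasDerivAt_G1 a x hρ)
  convert this using 1 <;> try rfl
  try (simp only [D2f]; ring)

lemma zero_mem : (0:ℝ) ∈ Ioo (-1:ℝ) 1 := by constructor <;> norm_num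

lemma hasDerivAt_G2_zero (a x : ℝ) : HasDerivAt (G2 a x) (-(3 * x)) 0 := by
  have hh' := hasDerivAt_hh zero_mem
  have hcube : HasDerivAt (fun s : ℝ => hh s ^ 3) (3 * hh 0 ^ 2 * (0 * hh 0 ^ 3)) 0 := by
    have := hh'.pow 3
    convert this using 1 <;> try rfl
    try push_cast; try ring
  have h5 : HasDerivAt (fun s : ℝ => hh s ^ 5) (5 * hh 0 ^ 4 * (0 * hh 0 ^ 3)) 0 := by
    have := hh'.pow 5
    convert this using 1 <;> try rfl
    try push_cast; try ring
  have l1 : HasDerivAt (fun s : ℝ => a - 3 * x * s) (-(3 * x)) 0 := by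
    have := ((hasDerivAt_id (0:ℝ)).const_mul (3 * x)).const_sub a
    simpa using this
  have t1 := l1.mul hcube
  have lsq : HasDerivAt (fun s : ℝ => 3 * s ^ 2) (3 * (2 * 0)) 0 := by
    have := (hasDerivAt_pow 2 (0:ℝ)).const_mul 3
    convert this using 1 <;> try rfl
    try push_cast; try ring
  have t2a := lsq.mul (hasDerivAt_lin a x 0)
  have t2 := t2a.mul h5
  have := t1.add t2
  convert this using 1 <;> try rfl
  try simp [hh_zero]
  try ring

lemma hasDerivAt_D2_zero (a x : ℝ) :
    HasDerivAt (D2f a x) (stdPDF a * (1 - a ^ 2) * (x ^ 3 - 3 * x)) 0 := by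
  have hφ := hasDerivAt_phig a x zero_mem
  have hg := hasDerivAt_gg a x zero_mem
  have hG1 := hasDerivAt_G1 a x zero_mem
  have hG2 := hasDerivAt_G2_zero a x
  have hG1sq : HasDerivAt (fun s : ℝ => G1 a x s ^ 2) (2 * G1 a x 0 ^ 1 * G2 a x 0) 0 :=
    hG1.pow 2
  have hprod := hg.mul hG1sq
  have hin := hG2.sub hprod
  have := hφ.mul hin
  convert this using 1 <;> try rfl
  have e1 : gg a x 0 = a := by simp [gg, hh_zero]
  have e2 : G1 a x 0 = -x := by simp [G1, hh_zero]
  have e3 : G2 a x 0 = a := by simp [G2, hh_zero]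
  simp only [Pi.sub_apply, Pi.mul_apply]
  rw [e1, e2, e3]
  ring

end Statement7Aux

open Statement7Aux

theorem statement7 (z μ x : ℝ) :
    let F : ℝ → ℝ := fun ρ => stdCDF ((z - μ - ρ * x) / Real.sqrt (1 - ρ ^ 2))
    iteratedDeriv 1 F 0 = -stdPDF (z - μ) * x ∧
    iteratedDeriv 2 F 0 = -stdPDF (z - μ) * (z - μ) * (x ^ 2 - 1) ∧
    iteratedDeriv 3 F 0 = -stdPDF (z - μ) * ((z - μ) ^ 2 - 1) * (x ^ 3 - 3 * x) := by
  intro F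
  set a := z - μ with ha
  have hFeq : F = fun ρ => stdCDF (gg a x ρ) := by
    funext ρ
    simp only [F, gg, hh, div_eq_mul_inv, ha]
    try ring_nf
  have hF : ∀ ρ ∈ Ioo (-1:ℝ) 1, HasDerivAt F (D1f a x ρ) ρ := by
    intro ρ hρ
    rw [hFeq]
    exact (hasDerivAt_stdCDF (gg a x ρ)).comp ρ (hasDerivAt_gg a x hρ)
  have hnhds : ∀ ρ ∈ Ioo (-1:ℝ) 1, Ioo (-1:ℝ) 1 ∈ 𝓝 ρ :=
    fun ρ hρ => isOpen_Ioo.mem_nhds hρ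
  have E1 : ∀ ρ ∈ Ioo (-1:ℝ) 1, deriv F ρ = D1f a x ρ := fun ρ hρ => (hF ρ hρ).deriv
  have E2 : ∀ ρ ∈ Ioo (-1:ℝ) 1, deriv (deriv F) ρ = D2f a x ρ := by
    intro ρ hρ
    have heq : deriv F =ᶠ[𝓝 ρ] D1f a x :=
      Filter.eventually_of_mem (hnhds ρ hρ) E1
    rw [heq.deriv_eq]
    exact (hasDerivAt_D1 a x hρ).deriv
  have e1 : gg a x 0 = a := by simp [gg, hh_zero]
  have e2 : G1 a x 0 = -x := by simp [G1, hh_zero]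
  have e3 : G2 a x 0 = a := by simp [G2, hh_zero]
  refine ⟨?_, ?_, ?_⟩
  · rw [iteratedDeriv_one, E1 0 zero_mem]
    simp only [D1f, e1, e2]; ring
  · rw [show (2:ℕ) = 1 + 1 from rfl, iteratedDeriv_succ, iteratedDeriv_one,
      E2 0 zero_mem]
    simp only [D2f, e1, e2, e3]; ring
  · rw [show (3:ℕ) = 2 + 1 from rfl, iteratedDeriv_succ,
      show iteratedDeriv 2 F = iteratedDeriv (1 + 1) F from rfl, iteratedDeriv_succ, iteratedDeriv_one]
    have heq2 : deriv (deriv F) =ᶠ[𝓝 0] D2f a x :=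
      Filter.eventually_of_mem (hnhds 0 zero_mem) E2
    rw [heq2.deriv_eq, (hasDerivAt_D2_zero a x).deriv]
    ring
end

section
/- Let μ₁, μ₂, c₁, c₂ ∈ ℝ and ρ ∈ [0,1). Then the lower-quadrant probability of the bivariate normal distribution admits the mixture representation ∬_{x<c₁, y<c₂} f_ρ(x,y) dx dy = ∫_ℝ Φ((c₁ − μ₁ − √ρ·u)/√(1−ρ)) · Φ((c₂ − μ₂ − √ρ·u)/√(1−ρ)) · φ(u) du. -/
open MeasureTheory Real Set Filter Asymptotics

lemma stdPDF_nonneg (x : ℝ) : 0 ≤ stdPDF x := by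
  unfold stdPDF; positivity

lemma integrable_stdPDF : Integrable stdPDF := by
  have h : Integrable (fun x : ℝ => Real.exp (-(1/2 : ℝ) * x ^ 2)) :=
    integrable_exp_neg_mul_sq (by norm_num)
  have := h.const_mul (Real.sqrt (2 * Real.pi))⁻¹
  convert this using 2 with x
  unfold stdPDF; ring_nf

lemma integral_stdPDF : ∫ x, stdPDF x = 1 := by
  have h : ∀ x : ℝ, stdPDF x = (Real.sqrt (2 * Real.pi))⁻¹ * Real.exp (-(1/2 : ℝ) * x ^ 2) := by
    intro x; unfold stdPDF; ring_nf
  simp_rw [h]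
  rw [integral_const_mul, integral_gaussian]
  rw [show π / (1/2 : ℝ) = 2 * π by ring]
  rw [inv_mul_cancel₀ (by positivity)]

lemma stdCDF_nonneg (x : ℝ) : 0 ≤ stdCDF x :=
  setIntegral_nonneg measurableSet_Iio fun u _ => stdPDF_nonneg u

lemma stdCDF_le_one (x : ℝ) : stdCDF x ≤ 1 := by
  rw [← integral_stdPDF]
  exact setIntegral_le_integral integrable_stdPDF
    (Filter.Eventually.of_forall fun u => stdPDF_nonneg u)

lemma gauss_translate (b m : ℝ) : ∫ u : ℝ, Real.exp (-b * (u - m) ^ 2) = Real.sqrt (π / b) := by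
  rw [← integral_gaussian b]
  have := integral_add_right_eq_self (μ := volume) (fun u : ℝ => Real.exp (-b * u ^ 2)) (-m)
  simp only [← sub_eq_add_neg] at this
  exact this

@[continuity, fun_prop]
lemma continuous_stdPDF : Continuous stdPDF := by
  unfold stdPDF; fun_prop

lemma integrable_stdPDF_affine {s : ℝ} (hs : 0 < s) (d : ℝ) :
    Integrable (fun x : ℝ => stdPDF ((x - d) / s)) := by
  have hb : (0 : ℝ) < 1 / (2 * s ^ 2) := by positivity
  have h : ∀ x : ℝ, stdPDF ((x - d) / s)
      = (Real.sqrt (2 * Real.pi))⁻¹ * Real.exp (-(1 / (2 * s ^ 2)) * (x - d) ^ 2) := by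
    intro x; unfold stdPDF
    have harg : -((x - d) / s) ^ 2 / 2 = -(1 / (2 * s ^ 2)) * (x - d) ^ 2 := by
      rw [div_pow]; ring_nf
    rw [harg]
  simp_rw [h]
  exact ((integrable_exp_neg_mul_sq hb).comp_sub_right d).const_mul (Real.sqrt (2 * Real.pi))⁻¹

lemma setIntegral_comp_affine (f : ℝ → ℝ) {s : ℝ} (hs : 0 < s) (d c : ℝ) :
    ∫ x in Iio c, f ((x - d) / s) = s * ∫ v in Iio ((c - d) / s), f v := by
  set e : ℝ → ℝ := fun v => s * v + d with he_def
  have he : MeasurableEmbedding e :=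
    ((Homeomorph.mulLeft₀ s hs.ne').trans (Homeomorph.addRight d)).measurableEmbedding
  have hmap : Measure.map e volume = ENNReal.ofReal s⁻¹ • volume := by
    have h0 : e = (fun x : ℝ => x + d) ∘ (fun v : ℝ => s * v) := rfl
    rw [h0, ← Measure.map_map (measurable_add_const d) (measurable_const_mul s),
      Real.map_volume_mul_left hs.ne', Measure.map_smul,
      map_add_right_eq_self volume d, abs_of_pos (inv_pos.2 hs)]
  have hpre : e ⁻¹' (Iio c) = Iio ((c - d) / s) := by
    ext v
    simp only [mem_preimage, mem_Iio, he_def]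
    rw [lt_div_iff₀ hs]
    constructor <;> intro h <;> nlinarith
  have h1 := he.setIntegral_map (fun x => f ((x - d) / s)) (Iio c) (μ := volume)
  rw [hmap, hpre] at h1
  have h2 : ∀ v : ℝ, f ((e v - d) / s) = f v := by
    intro v; simp only [he_def]; rw [add_sub_cancel_right, mul_div_cancel_left₀ _ hs.ne']
  simp_rw [h2] at h1
  rw [Measure.restrict_smul, integral_smul_measure, ENNReal.toReal_ofReal (by positivity)] at h1
  rw [← h1, smul_eq_mul, ← mul_assoc, mul_inv_cancel₀ hs.ne', one_mul]

lemma key_pointwise {r s : ℝ} (hs : 0 < s) (hs2 : s ^ 2 = 1 - r ^ 2) (a b : ℝ) :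
    ∫ u : ℝ, (s⁻¹ * stdPDF ((a - r * u) / s)) * (s⁻¹ * stdPDF ((b - r * u) / s)) * stdPDF u
      = (2 * π * (s * Real.sqrt (1 + r ^ 2)))⁻¹ *
          Real.exp (-(a ^ 2 - 2 * r ^ 2 * a * b + b ^ 2) / (2 * ((1 - r ^ 2) * (1 + r ^ 2)))) := by
  have h1r : (0 : ℝ) < 1 - r ^ 2 := hs2 ▸ (by positivity)
  have h1p : (0 : ℝ) < 1 + r ^ 2 := by positivity
  set β : ℝ := (1 + r ^ 2) / (2 * (1 - r ^ 2)) with hβ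
  set m : ℝ := r * (a + b) / (1 + r ^ 2) with hm
  set C : ℝ := s⁻¹ * (Real.sqrt (2 * π))⁻¹ * (s⁻¹ * (Real.sqrt (2 * π))⁻¹) * (Real.sqrt (2 * π))⁻¹
    with hC
  set D : ℝ := -(a ^ 2 - 2 * r ^ 2 * a * b + b ^ 2) / (2 * ((1 - r ^ 2) * (1 + r ^ 2))) with hD
  have hexp : ∀ u : ℝ, -((a - r * u) / s) ^ 2 / 2 + (-((b - r * u) / s) ^ 2 / 2 + -u ^ 2 / 2)
      = D + -β * (u - m) ^ 2 := by
    intro u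
    rw [div_pow, div_pow, hs2, hD, hβ, hm]
    field_simp
    ring
  have hfun : ∀ u : ℝ,
      (s⁻¹ * stdPDF ((a - r * u) / s)) * (s⁻¹ * stdPDF ((b - r * u) / s)) * stdPDF u
        = (C * Real.exp D) * Real.exp (-β * (u - m) ^ 2) := by
    intro u
    unfold stdPDF
    rw [show (s⁻¹ * ((Real.sqrt (2 * π))⁻¹ * Real.exp (-((a - r * u) / s) ^ 2 / 2))) *
          (s⁻¹ * ((Real.sqrt (2 * π))⁻¹ * Real.exp (-((b - r * u) / s) ^ 2 / 2))) *
          ((Real.sqrt (2 * π))⁻¹ * Real.exp (-u ^ 2 / 2))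
        = C * (Real.exp (-((a - r * u) / s) ^ 2 / 2) * (Real.exp (-((b - r * u) / s) ^ 2 / 2) *
            Real.exp (-u ^ 2 / 2))) from by rw [hC]; ring]
    rw [← Real.exp_add, ← Real.exp_add, hexp u, Real.exp_add]
    ring
  calc ∫ u : ℝ, (s⁻¹ * stdPDF ((a - r * u) / s)) * (s⁻¹ * stdPDF ((b - r * u) / s)) * stdPDF u
      = ∫ u : ℝ, (C * Real.exp D) * Real.exp (-β * (u - m) ^ 2) :=
        integral_congr_ae (Filter.Eventually.of_forall hfun)
    _ = (C * Real.exp D) * Real.sqrt (π / β) := by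
        rw [integral_const_mul, gauss_translate]
    _ = (2 * π * (s * Real.sqrt (1 + r ^ 2)))⁻¹ * Real.exp D := by
        have hβval : π / β = 2 * π * s ^ 2 / (1 + r ^ 2) := by
          rw [hβ, hs2]; field_simp
        have hsqrt : Real.sqrt (π / β) = Real.sqrt (2 * π) * s / Real.sqrt (1 + r ^ 2) := by
          rw [hβval, Real.sqrt_div (by positivity), Real.sqrt_mul (by positivity : (0:ℝ) ≤ 2 * π),
            Real.sqrt_sq hs.le]
        rw [hsqrt, hC]
        have hq : Real.sqrt (2 * π) ^ 2 = 2 * π := Real.sq_sqrt (by positivity)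
        have hqne : Real.sqrt (2 * π) ≠ 0 := by positivity
        have htne : Real.sqrt (1 + r ^ 2) ≠ 0 := by positivity
        rw [show (2 : ℝ) * π = Real.sqrt (2 * π) ^ 2 from hq.symm]
        field_simp
        ring
        rw [Real.sqrt_sq (by positivity)]

theorem statement8 (μ₁ μ₂ c₁ c₂ ρ : ℝ) (hρ : ρ ∈ Set.Ico (0 : ℝ) 1) :
    ∫ p in {p : ℝ × ℝ | p.1 < c₁ ∧ p.2 < c₂}, bvnPDF μ₁ μ₂ ρ p.1 p.2
      = ∫ u : ℝ, stdCDF ((c₁ - μ₁ - Real.sqrt ρ * u) / Real.sqrt (1 - ρ))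
          * stdCDF ((c₂ - μ₂ - Real.sqrt ρ * u) / Real.sqrt (1 - ρ)) * stdPDF u := by
  obtain ⟨hρ0, hρ1⟩ := hρ
  set r : ℝ := Real.sqrt ρ with hrdef
  set s : ℝ := Real.sqrt (1 - ρ) with hsdef
  have hr2 : r ^ 2 = ρ := Real.sq_sqrt hρ0
  have h1ρ : (0:ℝ) < 1 - ρ := by linarith
  have hs : 0 < s := Real.sqrt_pos.2 h1ρ
  have hs2 : s ^ 2 = 1 - r ^ 2 := by rw [hsdef, Real.sq_sqrt h1ρ.le, hr2]
  set F : ℝ → ℝ × ℝ → ℝ := fun u p =>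
    (s⁻¹ * stdPDF ((p.1 - μ₁ - r * u) / s)) * (s⁻¹ * stdPDF ((p.2 - μ₂ - r * u) / s)) * stdPDF u
    with hF
  set ν : Measure (ℝ × ℝ) := (volume.restrict (Iio c₁)).prod (volume.restrict (Iio c₂)) with hν
  -- pointwise mixture representation of the density
  have hbvn : ∀ p : ℝ × ℝ, bvnPDF μ₁ μ₂ ρ p.1 p.2 = ∫ u, F u p := by
    intro p
    have h := key_pointwise hs hs2 (p.1 - μ₁) (p.2 - μ₂)
    have hconst : Real.sqrt (1 - ρ ^ 2) = s * Real.sqrt (1 + r ^ 2) := by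
      rw [show 1 - ρ ^ 2 = (1 - ρ) * (1 + ρ) by ring, Real.sqrt_mul h1ρ.le, ← hsdef, ← hr2]
    rw [hF]
    rw [show (fun u : ℝ => (s⁻¹ * stdPDF ((p.1 - μ₁ - r * u) / s)) *
          (s⁻¹ * stdPDF ((p.2 - μ₂ - r * u) / s)) * stdPDF u)
        = fun u : ℝ => (s⁻¹ * stdPDF (((p.1 - μ₁) - r * u) / s)) *
          (s⁻¹ * stdPDF (((p.2 - μ₂) - r * u) / s)) * stdPDF u from rfl]
    rw [h]
    unfold bvnPDF
    rw [hconst]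
    congr 1
    rw [← hr2]
    ring_nf
  -- integrability of affine gaussians
  have hg : ∀ d : ℝ, Integrable (fun x : ℝ => s⁻¹ * stdPDF ((x - d) / s)) :=
    fun d => (integrable_stdPDF_affine hs d).const_mul s⁻¹
  -- factorization of the inner integral
  have hFac : ∀ u : ℝ, (∫ p, F u p ∂ν)
      = stdCDF ((c₁ - μ₁ - r * u) / s) * stdCDF ((c₂ - μ₂ - r * u) / s) * stdPDF u := by
    intro u
    have hsub : ∀ (d c : ℝ), ∫ x in Iio c, s⁻¹ * stdPDF ((x - d) / s) = stdCDF ((c - d) / s) := by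
      intro d c
      rw [integral_const_mul, setIntegral_comp_affine stdPDF hs d c, ← mul_assoc,
        inv_mul_cancel₀ hs.ne', one_mul]
      rfl
    calc (∫ p, F u p ∂ν)
        = (∫ p, (s⁻¹ * stdPDF ((p.1 - (μ₁ + r * u)) / s)) *
            (s⁻¹ * stdPDF ((p.2 - (μ₂ + r * u)) / s)) ∂ν) * stdPDF u := by
          rw [← integral_mul_const]
          exact integral_congr_ae (Filter.Eventually.of_forall fun p => by
            simp only [hF, sub_sub])
      _ = (∫ x in Iio c₁, s⁻¹ * stdPDF ((x - (μ₁ + r * u)) / s)) *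
            (∫ y in Iio c₂, s⁻¹ * stdPDF ((y - (μ₂ + r * u)) / s)) * stdPDF u := by
          rw [hν]
          exact congrArg (fun z => z * stdPDF u)
            (integral_prod_mul (fun x => s⁻¹ * stdPDF ((x - (μ₁ + r * u)) / s))
              (fun y => s⁻¹ * stdPDF ((y - (μ₂ + r * u)) / s)))
      _ = stdCDF ((c₁ - μ₁ - r * u) / s) * stdCDF ((c₂ - μ₂ - r * u) / s) * stdPDF u := by
          rw [hsub, hsub, sub_sub, sub_sub]
  -- joint integrability
  have hcontF : Continuous (Function.uncurry F) := by
    rw [hF]; unfold Function.uncurry; fun_prop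
  have hInt : Integrable (Function.uncurry F) (volume.prod ν) := by
    rw [integrable_prod_iff hcontF.aestronglyMeasurable]
    constructor
    · refine Filter.Eventually.of_forall fun u => ?_
      have h1 : Integrable (fun p : ℝ × ℝ =>
          (s⁻¹ * stdPDF ((p.1 - μ₁ - r * u) / s)) * (s⁻¹ * stdPDF ((p.2 - μ₂ - r * u) / s))) ν := by
        rw [hν]
        have ha := ((hg (μ₁ + r * u)).integrableOn (s := Iio c₁))
        have hb := ((hg (μ₂ + r * u)).integrableOn (s := Iio c₂))
        have := Integrable.mul_prod (L := ℝ) ha hb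
        exact this.congr (Filter.Eventually.of_forall fun p => by simp only [sub_sub])
      exact h1.mul_const (stdPDF u)
    · have hnorm : ∀ u : ℝ, (∫ p, ‖Function.uncurry F (u, p)‖ ∂ν) = ∫ p, F u p ∂ν := by
        intro u
        refine integral_congr_ae (Filter.Eventually.of_forall fun p => ?_)
        simp only [Function.uncurry_apply_pair, Real.norm_eq_abs]
        rw [abs_of_nonneg]
        exact mul_nonneg (mul_nonneg (mul_nonneg (by positivity) (stdPDF_nonneg _))
          (mul_nonneg (by positivity) (stdPDF_nonneg _))) (stdPDF_nonneg _)
      refine Integrable.mono' integrable_stdPDF ?_ ?_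
      · exact (hcontF.norm.aestronglyMeasurable).integral_prod_right'
      · refine Filter.Eventually.of_forall fun u => ?_
        rw [Real.norm_eq_abs, hnorm u, hFac u, abs_of_nonneg
          (mul_nonneg (mul_nonneg (stdCDF_nonneg _) (stdCDF_nonneg _)) (stdPDF_nonneg _))]
        have h1 := stdCDF_nonneg ((c₁ - μ₁ - r * u) / s)
        have h2 := stdCDF_le_one ((c₁ - μ₁ - r * u) / s)
        have h3 := stdCDF_nonneg ((c₂ - μ₂ - r * u) / s)
        have h4 := stdCDF_le_one ((c₂ - μ₂ - r * u) / s)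
        have h5 := stdPDF_nonneg u
        have h6 : stdCDF ((c₁ - μ₁ - r * u) / s) * stdCDF ((c₂ - μ₂ - r * u) / s) ≤ 1 := by
          nlinarith
        calc stdCDF ((c₁ - μ₁ - r * u) / s) * stdCDF ((c₂ - μ₂ - r * u) / s) * stdPDF u
            ≤ 1 * stdPDF u := mul_le_mul_of_nonneg_right h6 h5
          _ = stdPDF u := one_mul _
  -- assemble
  have hSet : {p : ℝ × ℝ | p.1 < c₁ ∧ p.2 < c₂} = Iio c₁ ×ˢ Iio c₂ := rfl
  have hrestrict : (volume : Measure (ℝ × ℝ)).restrict (Iio c₁ ×ˢ Iio c₂) = ν := by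
    rw [hν, Measure.prod_restrict, ← Measure.volume_eq_prod]
  calc ∫ p in {p : ℝ × ℝ | p.1 < c₁ ∧ p.2 < c₂}, bvnPDF μ₁ μ₂ ρ p.1 p.2
      = ∫ p, bvnPDF μ₁ μ₂ ρ p.1 p.2 ∂ν := by rw [hSet, hrestrict]
    _ = ∫ p, (∫ u, F u p) ∂ν :=
        integral_congr_ae (Filter.Eventually.of_forall fun p => hbvn p)
    _ = ∫ u, ∫ p, F u p ∂ν := (integral_integral_swap hInt).symm
    _ = ∫ u : ℝ, stdCDF ((c₁ - μ₁ - r * u) / s) * stdCDF ((c₂ - μ₂ - r * u) / s) * stdPDF u :=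
        integral_congr_ae (Filter.Eventually.of_forall fun u => hFac u)
end

section
/- Let z > 0 and define H(μ) = φ(z+μ)(z+μ) + φ(z−μ)(z−μ) for μ ∈ ℝ. Then there exists a unique μ_* ∈ (z, z+1) such that H(μ_*) = 0; moreover, for every μ ∈ ℝ, H(μ) > 0 if and only if μ ∈ (−μ_*, μ_*). -/
open MeasureTheory Real Set Filter Asymptotics

noncomputable def Kfun (z μ : ℝ) : ℝ := (z + μ) * Real.exp (-(2 * z * μ)) + (z - μ)

lemma H_eq (z μ : ℝ) :
    stdPDF (z + μ) * (z + μ) + stdPDF (z - μ) * (z - μ)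
      = (Real.sqrt (2 * Real.pi))⁻¹ * Real.exp (-(z - μ) ^ 2 / 2) * Kfun z μ := by
  unfold stdPDF Kfun
  have h : Real.exp (-(z + μ) ^ 2 / 2)
      = Real.exp (-(z - μ) ^ 2 / 2) * Real.exp (-(2 * z * μ)) := by
    rw [← Real.exp_add]; ring_nf
  rw [h]; ring

lemma sqrt2pi_pos : 0 < (Real.sqrt (2 * Real.pi))⁻¹ := by
  positivity

lemma Kfun_hasDerivAt (z x : ℝ) :
    HasDerivAt (Kfun z)
      (Real.exp (-(2 * z * x)) * (1 - 2 * z * (z + x)) - 1) x := by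
  have h1 : HasDerivAt (fun μ : ℝ => Real.exp (-(2 * z * μ)))
      (Real.exp (-(2 * z * x)) * (-(2 * z))) x := by
    have : HasDerivAt (fun μ : ℝ => -(2 * z * μ)) (-(2 * z)) x := by
      have h := ((hasDerivAt_id x).const_mul (2 * z)).neg
      simp only [mul_one] at h
      exact h
    exact this.exp
  have h2 : HasDerivAt (fun μ : ℝ => z + μ) 1 x := by
    simpa using (hasDerivAt_id x).const_add z
  have h3 : HasDerivAt (fun μ : ℝ => z - μ) (-1) x := by
    exact (hasDerivAt_id x).const_sub z
  have := (h2.mul h1).add h3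
  refine this.congr_deriv ?_
  ring

lemma Kfun_strictAntiOn (z : ℝ) (hz : 0 < z) : StrictAntiOn (Kfun z) (Set.Ici 0) := by
  apply strictAntiOn_of_deriv_neg (convex_Ici 0)
  · exact (Continuous.continuousOn (by unfold Kfun; fun_prop))
  · intro x hx
    rw [interior_Ici] at hx
    rw [(Kfun_hasDerivAt z x).deriv]
    have hE1 : Real.exp (-(2 * z * x)) < 1 := by
      rw [Real.exp_lt_one_iff]
      have hx' : 0 < x := hx
      nlinarith
    have hE0 : 0 < Real.exp (-(2 * z * x)) := Real.exp_pos _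
    have hzx : 0 < 2 * z * (z + x) := by
      have hx' : 0 < x := hx
      nlinarith
    nlinarith [mul_pos hE0 hzx]

lemma Kfun_neg (z μ : ℝ) : Kfun z (-μ) = Real.exp (2 * z * μ) * Kfun z μ := by
  unfold Kfun
  have h : Real.exp (2 * z * μ) * Real.exp (-(2 * z * μ)) = 1 := by
    rw [← Real.exp_add]; simp
  simp only [mul_neg, neg_neg]
  linear_combination (-(z + μ)) * h

theorem statement13 (z : ℝ) (hz : 0 < z) :
    ∃ μs : ℝ, μs ∈ Set.Ioo z (z + 1) ∧
      stdPDF (z + μs) * (z + μs) + stdPDF (z - μs) * (z - μs) = 0 ∧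
      (∀ μ' ∈ Set.Ioo z (z + 1),
        stdPDF (z + μ') * (z + μ') + stdPDF (z - μ') * (z - μ') = 0 → μ' = μs) ∧
      ∀ μ : ℝ, 0 < stdPDF (z + μ) * (z + μ) + stdPDF (z - μ) * (z - μ) ↔
        μ ∈ Set.Ioo (-μs) μs := by
  have hanti := Kfun_strictAntiOn z hz
  -- K z z > 0
  have hKz : 0 < Kfun z z := by
    unfold Kfun
    have := Real.exp_pos (-(2 * z * z))
    nlinarith
  -- K z (z+1) < 0
  have hKz1 : Kfun z (z + 1) < 0 := by
    unfold Kfun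
    have h1 : 2 * z * (z + 1) + 1 < Real.exp (2 * z * (z + 1)) := by
      have := Real.add_one_lt_exp (x := 2 * z * (z + 1)) (by nlinarith : (0:ℝ) < 2 * z * (z + 1)).ne'
      linarith
    have h2 : (z + (z + 1)) * Real.exp (-(2 * z * (z + 1))) < 1 := by
      rw [Real.exp_neg, mul_inv_lt_iff₀ (Real.exp_pos _), one_mul]
      nlinarith
    linarith
  -- IVT
  have hcont : ContinuousOn (Kfun z) (Set.Icc z (z + 1)) := by
    apply Continuous.continuousOn; unfold Kfun; fun_prop
  have hmem : (0 : ℝ) ∈ Set.Ioo (Kfun z (z + 1)) (Kfun z z) := ⟨hKz1, hKz⟩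
  obtain ⟨μs, hμs, hKμs⟩ := intermediate_value_Ioo' (by linarith : z ≤ z + 1) hcont hmem
  have hμs0 : (0 : ℝ) ≤ μs := by linarith [hμs.1]
  -- sign equivalences between H and K
  have hsign : ∀ μ : ℝ, (0 < stdPDF (z + μ) * (z + μ) + stdPDF (z - μ) * (z - μ) ↔ 0 < Kfun z μ)
      ∧ (stdPDF (z + μ) * (z + μ) + stdPDF (z - μ) * (z - μ) = 0 ↔ Kfun z μ = 0) := by
    intro μ
    rw [H_eq]
    have hc : 0 < (Real.sqrt (2 * Real.pi))⁻¹ * Real.exp (-(z - μ) ^ 2 / 2) :=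
      mul_pos sqrt2pi_pos (Real.exp_pos _)
    constructor
    · constructor
      · intro h; nlinarith
      · intro h; exact mul_pos hc h
    · constructor
      · intro h
        rcases mul_eq_zero.mp h with h' | h'
        · exact absurd h' hc.ne'
        · exact h'
      · intro h; rw [h, mul_zero]
  refine ⟨μs, hμs, ((hsign μs).2).mpr hKμs, ?_, ?_⟩
  · intro μ' hμ' hH
    have hK' : Kfun z μ' = 0 := ((hsign μ').2).mp hH
    exact hanti.injOn (Set.mem_Ici.mpr (le_of_lt (lt_trans hz hμ'.1))) (Set.mem_Ici.mpr hμs0) (by rw [hK', hKμs])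
  · intro μ
    rw [(hsign μ).1, Set.mem_Ioo, ← abs_lt]
    -- 0 < Kfun z μ ↔ |μ| < μs
    have habs : 0 < Kfun z μ ↔ 0 < Kfun z |μ| := by
      rcases le_or_gt 0 μ with h | h
      · rw [abs_of_nonneg h]
      · rw [abs_of_neg h, Kfun_neg]
        constructor
        · intro hp; exact mul_pos (Real.exp_pos _) hp
        · intro hp; nlinarith [Real.exp_pos (2 * z * μ)]
    rw [habs]
    constructor
    · intro h
      by_contra hle
      push_neg at hle
      rcases eq_or_lt_of_le hle with he | hlt
      · rw [← he, hKμs] at h; exact lt_irrefl 0 h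
      · have := hanti hμs0 (le_trans hμs0 hle) hlt
        rw [hKμs] at this; linarith
    · intro h
      have := hanti (abs_nonneg μ) hμs0 h
      rw [hKμs] at this; linarith
end

section
/- Let z > 0 and μ ∈ (z, z+1). Then φ(z+μ)[1 − (z+μ)²] − φ(z−μ)[1 − (z−μ)²] ≤ −4φ(z+μ)·z·μ < 0; in particular, the function H(μ) = φ(z+μ)(z+μ) + φ(z−μ)(z−μ) has strictly negative derivative on the interval (z, z+1). -/
open MeasureTheory Real Set Filter Asymptotics

lemma stdPDF_pos (x : ℝ) : 0 < stdPDF x := by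
  unfold stdPDF
  positivity

lemma stdPDF_le (a b : ℝ) (h : b ^ 2 ≤ a ^ 2) : stdPDF a ≤ stdPDF b := by
  unfold stdPDF
  have : Real.exp (-a ^ 2 / 2) ≤ Real.exp (-b ^ 2 / 2) := by
    apply Real.exp_le_exp.2; linarith
  have hc : (0:ℝ) ≤ (Real.sqrt (2 * Real.pi))⁻¹ := by positivity
  exact mul_le_mul_of_nonneg_left this hc

lemma hasDerivAt_g (x : ℝ) :
    HasDerivAt (fun x => stdPDF x * x) (stdPDF x * (1 - x ^ 2)) x := by
  have h1 : HasDerivAt (fun x : ℝ => -x ^ 2 / 2) (-x) x := by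
    have := ((hasDerivAt_pow 2 x).neg).div_const 2
    simpa using this.congr_deriv (by ring)
  have h2 := (h1.exp).const_mul ((Real.sqrt (2 * Real.pi))⁻¹)
  have h3 := h2.mul (hasDerivAt_id x)
  convert h3 using 1
  · rfl
  · rfl
  · rfl
  simp only [id_eq]
  unfold stdPDF; ring

theorem statement14 (z μ : ℝ) (hz : 0 < z) (hμ : μ ∈ Set.Ioo z (z + 1)) :
    stdPDF (z + μ) * (1 - (z + μ) ^ 2) - stdPDF (z - μ) * (1 - (z - μ) ^ 2)
        ≤ -4 * stdPDF (z + μ) * z * μ ∧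
    -4 * stdPDF (z + μ) * z * μ < 0 ∧
    deriv (fun m => stdPDF (z + m) * (z + m) + stdPDF (z - m) * (z - m)) μ < 0 := by
  obtain ⟨h1, h2⟩ := hμ
  have hb2 : (z - μ) ^ 2 ≤ 1 := by nlinarith
  have hle : stdPDF (z + μ) ≤ stdPDF (z - μ) := stdPDF_le _ _ (by nlinarith)
  have hmul := mul_le_mul_of_nonneg_right hle (sub_nonneg.2 hb2)
  have key : stdPDF (z + μ) * (1 - (z + μ) ^ 2) - stdPDF (z - μ) * (1 - (z - μ) ^ 2)
      ≤ -4 * stdPDF (z + μ) * z * μ := by nlinarith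
  have hpos : 0 < stdPDF (z + μ) := stdPDF_pos _
  have hneg : -4 * stdPDF (z + μ) * z * μ < 0 := by nlinarith [mul_pos (mul_pos hpos hz) (hz.trans h1)]
  refine ⟨key, hneg, ?_⟩
  have hd1 : HasDerivAt (fun m : ℝ => stdPDF (z + m) * (z + m))
      (stdPDF (z + μ) * (1 - (z + μ) ^ 2)) μ := by
    have := (hasDerivAt_g (z + μ)).comp μ ((hasDerivAt_id μ).const_add z)
    simpa [Function.comp_def] using this
  have hd2 : HasDerivAt (fun m : ℝ => stdPDF (z - m) * (z - m))
      (-(stdPDF (z - μ) * (1 - (z - μ) ^ 2))) μ := by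
    have := (hasDerivAt_g (z - μ)).comp μ ((hasDerivAt_id μ).const_sub z)
    simpa [Function.comp_def] using this
  have hd := hd1.add hd2
  rw [show (fun m => stdPDF (z + m) * (z + m) + stdPDF (z - m) * (z - m)) = ((fun m => stdPDF (z + m) * (z + m)) + fun m => stdPDF (z - m) * (z - m)) from rfl, hd.deriv]
  linarith
end
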